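/- Let X be a compact Hausdorff space, let B be a base of X consisting of cozero sets, and let s be a witness of the FNS property for B. Then for every countable family A ⊆ B there exists a countable, weakly completely regular family P with A ⊆ P ⊆ B and s(V) ⊆ P for all V ∈ P. -/

import Mathlib

/-- A base of a topological space: a family of open sets such that every open
set is a union of members of the family. -/
def IsTopBase {X : Type*} [TopologicalSpace X] (B : Set (Set X)) : Prop :=
  (∀ U ∈ B, IsOpen U) ∧ ∀ U : Set X, IsOpen U → ∃ S ⊆ B, U = ⋃₀ S

/-- A π-base: a family of nonempty open sets such that every nonempty open set
contains a member of the family. -/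
def IsPiBase {X : Type*} [TopologicalSpace X] (B : Set (Set X)) : Prop :=
  (∀ U ∈ B, IsOpen U ∧ U.Nonempty) ∧
  ∀ U : Set X, IsOpen U → U.Nonempty → ∃ V ∈ B, V ⊆ U

/-- A cozero set: a set of the form `f ⁻¹' (0,1]` for a continuous `f : X → [0,1]`. -/
def IsCozeroSet {X : Type*} [TopologicalSpace X] (U : Set X) : Prop :=
  ∃ f : X → ℝ, Continuous f ∧ (∀ x, f x ∈ Set.Icc (0 : ℝ) 1) ∧
    U = f ⁻¹' Set.Ioc (0 : ℝ) 1

/-- `s` witnesses the FNS property for the family `B`: it assigns to each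
`U ∈ B` a finite subfamily `s U ⊆ B` such that whenever `U, V ∈ B` are
disjoint there are disjoint `W_U, W_V ∈ s U ∩ s V` with `U ⊆ W_U`, `V ⊆ W_V`. -/
def FNSWitness {X : Type*} (B : Set (Set X)) (s : Set X → Set (Set X)) : Prop :=
  (∀ U ∈ B, s U ⊆ B ∧ (s U).Finite) ∧
  ∀ U ∈ B, ∀ V ∈ B, Disjoint U V →
    ∃ WU ∈ s U ∩ s V, ∃ WV ∈ s U ∩ s V, Disjoint WU WV ∧ U ⊆ WU ∧ V ⊆ WV

/-- A family `B` has the FNS property if some `s` witnesses it. -/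
def HasFNS {X : Type*} (B : Set (Set X)) : Prop :=
  ∃ s : Set X → Set (Set X), FNSWitness B s

/-- A space has the π-FNS property if some π-base of it has the FNS property. -/
def HasPiFNS (X : Type*) [TopologicalSpace X] : Prop :=
  ∃ B : Set (Set X), IsPiBase B ∧ HasFNS B

/-- `u, l` witness the FN property for the family `F`. -/
def FNWitness {X : Type*} (F : Set (Set X)) (u l : Set X → Set (Set X)) : Prop :=
  (∀ V ∈ F, (u V).Finite ∧ ∀ U ∈ u V, U ∈ F ∧ V ⊆ U) ∧
  (∀ V ∈ F, (l V).Finite ∧ ∀ U ∈ l V, U ∈ F ∧ U ⊆ V) ∧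
  ∀ V ∈ F, ∀ W ∈ F, V ⊆ W → (u V ∩ l W).Nonempty

/-- A family `F` has the FN property if some pair `u, l` witnesses it. -/
def HasFN {X : Type*} (F : Set (Set X)) : Prop :=
  ∃ u l : Set X → Set (Set X), FNWitness F u l

/-- A family `P` of subsets of `X` is weakly completely regular: for any
finitely many `U₁, …, U_k ∈ P` (`k ≥ 1`) there are sequences `(A n)`, `(B n)`
of finite subfamilies of `P` with
`U₁ ∩ … ∩ U_k = ⋃ n, ⋃₀ A n = ⋃ n, (X \ ⋃₀ B n)` and
`⋃₀ A n ⊆ X \ ⋃₀ B n` for each `n`. -/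
def WeaklyCompletelyRegularFamily {X : Type*} (P : Set (Set X)) : Prop :=
  ∀ S : Set (Set X), S.Finite → S.Nonempty → S ⊆ P →
    ∃ A B : ℕ → Set (Set X),
      (∀ n, A n ⊆ P ∧ (A n).Finite) ∧ (∀ n, B n ⊆ P ∧ (B n).Finite) ∧
      ⋂₀ S = ⋃ n, ⋃₀ A n ∧ ⋂₀ S = ⋃ n, (⋃₀ B n)ᶜ ∧
      ∀ n, ⋃₀ A n ⊆ (⋃₀ B n)ᶜ

/-- The equivalence relation `x ~_P y` iff `x, y` belong to exactly the same
members of `P`. -/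
def famSetoid {X : Type*} (P : Set (Set X)) : Setoid X where
  r x y := ∀ V ∈ P, (x ∈ V ↔ y ∈ V)
  iseqv := ⟨fun _ _ _ => Iff.rfl, fun h V hV => (h V hV).symm,
    fun h1 h2 V hV => (h1 V hV).trans (h2 V hV)⟩

open Set

private lemma isCozeroSet_univ' {X : Type*} [TopologicalSpace X] :
    IsCozeroSet (Set.univ : Set X) :=
  ⟨fun _ => 1, continuous_const, fun _ => ⟨zero_le_one, le_rfl⟩, by
    ext x; simp [Set.mem_Ioc]⟩

private lemma IsCozeroSet.inter' {X : Type*} [TopologicalSpace X] {U V : Set X}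
    (hU : IsCozeroSet U) (hV : IsCozeroSet V) : IsCozeroSet (U ∩ V) := by
  obtain ⟨f, hf, hfb, rfl⟩ := hU
  obtain ⟨g, hg, hgb, rfl⟩ := hV
  refine ⟨fun x => min (f x) (g x), hf.min hg,
    fun x => ⟨le_min (hfb x).1 (hgb x).1, min_le_of_left_le (hfb x).2⟩, ?_⟩
  ext x
  simp only [mem_inter_iff, mem_preimage, mem_Ioc, lt_min_iff, min_le_iff]
  constructor
  · rintro ⟨⟨h1, h2⟩, ⟨h3, _⟩⟩; exact ⟨⟨h1, h3⟩, Or.inl h2⟩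
  · rintro ⟨⟨h1, h3⟩, _⟩; exact ⟨⟨h1, (hfb x).2⟩, ⟨h3, (hgb x).2⟩⟩

private lemma isCozeroSet_sInter' {X : Type*} [TopologicalSpace X] :
    ∀ {S : Set (Set X)}, S.Finite → (∀ U ∈ S, IsCozeroSet U) → IsCozeroSet (⋂₀ S) := by
  intro S hS
  refine Set.Finite.induction_on S hS (fun _ => by simpa using isCozeroSet_univ' (X := X))
    (fun {a T} ha hT ih h => ?_)
  rw [Set.sInter_insert]
  exact (h _ (mem_insert _ _)).inter' (ih fun U hU => h U (Or.inr hU))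

private lemma base_subcover' {X : Type*} [TopologicalSpace X] {B : Set (Set X)}
    (hB : IsTopBase B) {K W : Set X} (hK : IsCompact K) (hW : IsOpen W)
    (hKW : K ⊆ W) : ∃ F, F ⊆ B ∧ F.Finite ∧ K ⊆ ⋃₀ F ∧ ⋃₀ F ⊆ W := by
  obtain ⟨S, hSB, rfl⟩ := hB.2 W hW
  have hcov : K ⊆ ⋃ U ∈ S, U := by rwa [← sUnion_eq_biUnion]
  obtain ⟨F, hFS, hFfin, hKF⟩ :=
    hK.elim_finite_subcover_image (c := fun U => U) (fun U hU => hB.1 U (hSB hU)) hcov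
  refine ⟨F, hFS.trans hSB, hFfin, ?_, ?_⟩
  · rwa [sUnion_eq_biUnion]
  · exact sUnion_mono hFS

private lemma cozero_wcr' {X : Type*} [TopologicalSpace X] [CompactSpace X]
    {B : Set (Set X)} (hB : IsTopBase B) {U : Set X} (hU : IsCozeroSet U) :
    ∃ A B' : ℕ → Set (Set X),
      (∀ n, A n ⊆ B ∧ (A n).Finite) ∧ (∀ n, B' n ⊆ B ∧ (B' n).Finite) ∧
      U = ⋃ n, ⋃₀ A n ∧ U = ⋃ n, (⋃₀ B' n)ᶜ ∧ ∀ n, ⋃₀ A n ⊆ (⋃₀ B' n)ᶜ := by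
  obtain ⟨f, hf, hfb, rfl⟩ := hU
  set U : Set X := f ⁻¹' Ioc (0 : ℝ) 1 with hUdef
  have hUIoi : U = f ⁻¹' Ioi (0 : ℝ) := by
    ext x
    simp only [hUdef, mem_preimage, mem_Ioc, mem_Ioi]
    exact ⟨fun h => h.1, fun h => ⟨h, (hfb x).2⟩⟩
  have hUopen : IsOpen U := by rw [hUIoi]; exact isOpen_Ioi.preimage hf
  set K : ℕ → Set X := fun n => f ⁻¹' Icc (1 / (n + 1) : ℝ) 1 with hKdef
  set C : ℕ → Set X := fun n => f ⁻¹' Icc (1 / (n + 2) : ℝ) 1 with hCdef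
  set V : ℕ → Set X := fun n => f ⁻¹' Ioi (1 / (n + 2) : ℝ) with hVdef
  have h12 : ∀ n : ℕ, (1 / (n + 2) : ℝ) < 1 / (n + 1) := by
    intro n
    apply one_div_lt_one_div_of_lt <;> [positivity; norm_num]
  have hpos : ∀ n : ℕ, (0 : ℝ) < 1 / (n + 2) := by intro n; positivity
  have hKcomp : ∀ n, IsCompact (K n) := fun n => (isClosed_Icc.preimage hf).isCompact
  have hVopen : ∀ n, IsOpen (V n) := fun n => isOpen_Ioi.preimage hf
  have hCclosed : ∀ n, IsClosed (C n) := fun n => isClosed_Icc.preimage hf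
  have hKV : ∀ n, K n ⊆ V n := fun n x hx => lt_of_lt_of_le (h12 n) hx.1
  have hVC : ∀ n, V n ⊆ C n := fun n x hx => ⟨le_of_lt hx, (hfb x).2⟩
  have hCU : ∀ n, C n ⊆ U := fun n x hx => ⟨lt_of_lt_of_le (hpos n) hx.1, hx.2⟩
  have hKC : ∀ n, K n ⊆ C n := fun n => (hKV n).trans (hVC n)
  have hcover : U ⊆ ⋃ n, K n := by
    intro x hx
    obtain ⟨n, hn⟩ := exists_nat_one_div_lt (K := ℝ) hx.1
    exact mem_iUnion.2 ⟨n, le_of_lt hn, hx.2⟩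
  choose A hAB hAfin hKA hAV using
    fun n => base_subcover' hB (hKcomp n) (hVopen n) (hKV n)
  have hUcC : ∀ n, Uᶜ ⊆ (C n)ᶜ := fun n => compl_subset_compl.2 (hCU n)
  choose B' hB'B hB'fin hUB' hB'C using
    fun n => base_subcover' hB (hUopen.isClosed_compl.isCompact) (hCclosed n).isOpen_compl
      (hUcC n)
  have hCcB' : ∀ n, C n ⊆ (⋃₀ B' n)ᶜ := fun n => subset_compl_comm.1 (hB'C n)
  have hB'U : ∀ n, (⋃₀ B' n)ᶜ ⊆ U := fun n => compl_subset_comm.1 (hUB' n)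
  refine ⟨A, B', fun n => ⟨hAB n, hAfin n⟩, fun n => ⟨hB'B n, hB'fin n⟩, ?_, ?_, ?_⟩
  · apply subset_antisymm
    · intro x hx
      obtain ⟨n, hn⟩ := mem_iUnion.1 (hcover hx)
      exact mem_iUnion.2 ⟨n, hKA n hn⟩
    · exact iUnion_subset fun n => (hAV n).trans ((hVC n).trans (hCU n))
  · apply subset_antisymm
    · intro x hx
      obtain ⟨n, hn⟩ := mem_iUnion.1 (hcover hx)
      exact mem_iUnion.2 ⟨n, hCcB' n (hKC n hn)⟩
    · exact iUnion_subset fun n => hB'U n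
  · exact fun n => (hAV n).trans ((hVC n).trans (hCcB' n))

/-- If `B` is a base of a compact Hausdorff space consisting of cozero sets and
`s` witnesses the FNS property for `B`, then every countable `A ⊆ B` extends to
a countable weakly completely regular family `P` with `A ⊆ P ⊆ B` closed under
the operator `s`. -/
theorem exists_countable_wcr_closed_under_s {X : Type*} [TopologicalSpace X]
    [CompactSpace X] [T2Space X] (B : Set (Set X)) (hB : IsTopBase B)
    (hBcoz : ∀ U ∈ B, IsCozeroSet U) (s : Set X → Set (Set X))
    (hs : FNSWitness B s) :
    ∀ A : Set (Set X), A ⊆ B → A.Countable →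
      ∃ P : Set (Set X), A ⊆ P ∧ P ⊆ B ∧ P.Countable ∧
        WeaklyCompletelyRegularFamily P ∧ ∀ V ∈ P, s V ⊆ P := by
  classical
  intro A hAB hAc
  -- Choice of WCR witnesses for every finite subfamily of B
  have key : ∀ S : Set (Set X), ∃ 𝒜 ℬ : ℕ → Set (Set X),
      S.Finite → S ⊆ B →
      (∀ n, 𝒜 n ⊆ B ∧ (𝒜 n).Finite) ∧ (∀ n, ℬ n ⊆ B ∧ (ℬ n).Finite) ∧
      ⋂₀ S = ⋃ n, ⋃₀ 𝒜 n ∧ ⋂₀ S = ⋃ n, (⋃₀ ℬ n)ᶜ ∧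
      ∀ n, ⋃₀ 𝒜 n ⊆ (⋃₀ ℬ n)ᶜ := by
    intro S
    by_cases hfin : S.Finite ∧ S ⊆ B
    · have hcoz : IsCozeroSet (⋂₀ S) :=
        isCozeroSet_sInter' hfin.1 fun U hU => hBcoz U (hfin.2 hU)
      obtain ⟨𝒜, ℬ, h1, h2, h3, h4, h5⟩ := cozero_wcr' hB hcoz
      exact ⟨𝒜, ℬ, fun _ _ => ⟨h1, h2, h3, h4, h5⟩⟩
    · exact ⟨fun _ => ∅, fun _ => ∅, fun h1 h2 => absurd ⟨h1, h2⟩ hfin⟩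
  choose 𝒜 ℬ hkey using key
  -- The closing-off chain
  let step : Set (Set X) → Set (Set X) := fun P =>
    (P ∪ ⋃ V ∈ P, s V) ∪
      ⋃ S ∈ {T : Set (Set X) | T.Finite ∧ T ⊆ P}, ⋃ n, 𝒜 S n ∪ ℬ S n
  have hstep_mono : ∀ P : Set (Set X), P ⊆ step P := fun P =>
    (subset_union_left).trans subset_union_left
  let c : ℕ → Set (Set X) := fun k => Nat.rec A (fun _ P => step P) k
  have hc_succ : ∀ k, c (k + 1) = step (c k) := fun k => rfl
  have hc_mono : ∀ j k, j ≤ k → c j ⊆ c k := by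
    intro j k hjk
    induction k with
    | zero => rw [Nat.le_zero.1 hjk]
    | succ k ih =>
        rcases Nat.lt_or_ge j (k + 1) with h | h
        · exact (ih (Nat.lt_succ_iff.1 h)).trans (hstep_mono (c k))
        · rw [Nat.le_antisymm hjk h]
  -- each stage is a countable subfamily of B
  have hcB : ∀ k, c k ⊆ B ∧ (c k).Countable := by
    intro k
    induction k with
    | zero => exact ⟨hAB, hAc⟩
    | succ k ih =>
        obtain ⟨ihB, ihc⟩ := ih
        constructor
        · rw [hc_succ]
          refine union_subset (union_subset ihB ?_) ?_
          · exact iUnion₂_subset fun V hV => (hs.1 V (ihB hV)).1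
          · refine iUnion₂_subset fun S hS => iUnion_subset fun n => ?_
            have h := hkey S hS.1 (hS.2.trans ihB)
            exact union_subset (h.1 n).1 (h.2.1 n).1
        · rw [hc_succ]
          refine (Set.Countable.union (ihc.union ?_) ?_)
          · exact Set.Countable.biUnion ihc
              fun V hV => ((hs.1 V (ihB hV)).2).countable
          · refine Set.Countable.biUnion (Set.countable_setOf_finite_subset ihc)
              fun S hS => Set.countable_iUnion fun n => ?_
            have h := hkey S hS.1 (hS.2.trans ihB)
            exact ((h.1 n).2.union (h.2.1 n).2).countable
  refine ⟨⋃ k, c k, ?_, ?_, ?_, ?_, ?_⟩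
  · exact subset_iUnion c 0
  · exact iUnion_subset fun k => (hcB k).1
  · exact Set.countable_iUnion fun k => (hcB k).2
  · -- weakly completely regular
    intro S hSfin hSne hSP
    -- S is contained in some stage
    have hstage : ∀ T : Set (Set X), T.Finite → T ⊆ ⋃ k, c k → ∃ k, T ⊆ c k := by
      intro T hTfin
      refine Set.Finite.induction_on T hTfin (fun _ => ⟨0, empty_subset _⟩)
        (fun {a T} ha hT ih hsub => ?_)
      obtain ⟨k, hk⟩ := ih ((subset_insert a T).trans hsub)
      obtain ⟨j, hj⟩ := mem_iUnion.1 (hsub (mem_insert a T))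
      exact ⟨max j k, insert_subset (hc_mono j _ (le_max_left j k) hj)
        (hk.trans (hc_mono k _ (le_max_right j k)))⟩
    obtain ⟨k, hk⟩ := hstage S hSfin hSP
    have hSB : S ⊆ B := hk.trans (hcB k).1
    obtain ⟨h1, h2, h3, h4, h5⟩ := hkey S hSfin hSB
    have hmem : ∀ n, 𝒜 S n ∪ ℬ S n ⊆ c (k + 1) := by
      intro n
      rw [hc_succ]
      refine subset_union_of_subset_right ?_ _
      intro W hW
      exact mem_iUnion₂.2 ⟨S, ⟨hSfin, hk⟩, mem_iUnion.2 ⟨n, hW⟩⟩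
    refine ⟨𝒜 S, ℬ S, fun n => ⟨?_, (h1 n).2⟩, fun n => ⟨?_, (h2 n).2⟩, h3, h4, h5⟩
    · exact (subset_union_left.trans (hmem n)).trans (subset_iUnion c (k + 1))
    · exact (subset_union_right.trans (hmem n)).trans (subset_iUnion c (k + 1))
  · -- closed under s
    intro V hV W hW
    obtain ⟨k, hk⟩ := mem_iUnion.1 hV
    have : W ∈ c (k + 1) := by
      rw [hc_succ]
      exact Or.inl (Or.inr (mem_iUnion₂.2 ⟨V, hk, hW⟩))
    exact mem_iUnion.2 ⟨k + 1, this⟩
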